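/- There exists a constant A > 0, depending only on Γ, α, ν, u₀, e₀, such that for every c = (c₁, c₂) ∈ ℝ² satisfying c₁ + u₀ + Γ A (|c₂| + 1)/u₀ < 0 and c₂ + e₀ > 0, one has c ∈ 𝒞. In particular, the feasible set 𝒞 is unbounded. -/

import Mathlib

noncomputable section

/-- `(u, e)` solves the profile ODE
`u′ = (u₀/α)(c₁ + u + Γ e/u)`, `e′ = (u₀/ν)(c₂ − c₁ u − u²/2 + e)`
on the set `S`, with initial data `u 0 = u₀`, `e 0 = e₀`. -/
def IsProfileSol (Γ α ν u₀ e₀ : ℝ) (c : ℝ × ℝ) (u e : ℝ → ℝ) (S : Set ℝ) : Prop :=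
  u 0 = u₀ ∧ e 0 = e₀ ∧
  ∀ x ∈ S,
    HasDerivWithinAt u ((u₀ / α) * (c.1 + u x + Γ * e x / u x)) S x ∧
    HasDerivWithinAt e ((u₀ / ν) * (c.2 - c.1 * u x - (u x) ^ 2 / 2 + e x)) S x

/-- The feasible set 𝒞: the set of constants of integration `c` for which the solution of
the profile ODE is defined on `[0,1]` with `u > 0` and `e > 0` on `[0,1]`. -/
def Feasible (Γ α ν u₀ e₀ : ℝ) : Set (ℝ × ℝ) :=
  {c | ∃ u e : ℝ → ℝ,
    IsProfileSol Γ α ν u₀ e₀ c u e (Set.Icc 0 1) ∧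
    ∀ x ∈ Set.Icc (0:ℝ) 1, 0 < u x ∧ 0 < e x}

open Set Filter Metric Real
open scoped Topology

lemma clamp_lip (lo hi x y : ℝ) : |max lo (min x hi) - max lo (min y hi)| ≤ |x - y| := by
  have h1 : |max lo (min x hi) - max lo (min y hi)| ≤ |min x hi - min y hi| := by
    rw [max_comm lo, max_comm lo]
    exact abs_max_sub_max_le_abs _ _ _
  have h2 : |min x hi - min y hi| ≤ max |x - y| |hi - hi| :=
    abs_min_sub_min_le_max _ _ _ _
  have h2' : |min x hi - min y hi| ≤ |x - y| := by simpa using h2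
  exact h1.trans h2'

lemma hdw_fst {f : ℝ → ℝ × ℝ} {d : ℝ × ℝ} {s : Set ℝ} {t : ℝ}
    (h : HasDerivWithinAt f d s t) :
    HasDerivWithinAt (fun x => (f x).1) d.1 s t := by
  have := h.hasFDerivWithinAt.fst
  simpa using this.hasDerivWithinAt

lemma hdw_snd {f : ℝ → ℝ × ℝ} {d : ℝ × ℝ} {s : Set ℝ} {t : ℝ}
    (h : HasDerivWithinAt f d s t) :
    HasDerivWithinAt (fun x => (f x).2) d.2 s t := by
  have := h.hasFDerivWithinAt.snd
  simpa using this.hasDerivWithinAt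

/-- If the derivative (within `Icc 0 1`) at `s` is negative, then `g t < g s` just to the right. -/
lemma right_dec {g : ℝ → ℝ} {d s : ℝ} (h : HasDerivWithinAt g d (Icc 0 1) s) (hd : d < 0) :
    ∃ ε > 0, ∀ t ∈ Icc (0:ℝ) 1, s < t → t < s + ε → g t < g s := by
  have hs := hasDerivWithinAt_iff_tendsto_slope.mp h
  have hev : ∀ᶠ t in 𝓝[Icc (0:ℝ) 1 \ {s}] s, slope g s t < 0 := hs.eventually_lt_const hd
  rw [eventually_iff, mem_nhdsWithin_iff] at hev
  obtain ⟨ε, hε, hsub⟩ := hev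
  refine ⟨ε, hε, fun t ht hst htε => ?_⟩
  have hmem : t ∈ ball s ε ∩ (Icc (0:ℝ) 1 \ {s}) := by
    refine ⟨?_, ht, by simp [ne_of_gt hst]⟩
    rw [mem_ball, Real.dist_eq, abs_of_pos (by linarith)]
    linarith
  have hslope : slope g s t < 0 := hsub hmem
  rw [slope_def_field] at hslope
  have htspos : 0 < t - s := by linarith
  have := (div_neg_iff.mp hslope)
  rcases this with ⟨h1,h2⟩|⟨h1,h2⟩
  · linarith
  · linarith

lemma right_inc {g : ℝ → ℝ} {d s : ℝ} (h : HasDerivWithinAt g d (Icc 0 1) s) (hd : 0 < d) :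
    ∃ ε > 0, ∀ t ∈ Icc (0:ℝ) 1, s < t → t < s + ε → g s < g t := by
  obtain ⟨ε, hε, hh⟩ := right_dec (h.neg) (by linarith : -d < 0)
  refine ⟨ε, hε, fun t ht h1 h2 => ?_⟩
  have h3 : -g t < -g s := hh t ht h1 h2
  linarith

lemma cont_lt {g : ℝ → ℝ} {s C : ℝ} (hg : ContinuousWithinAt g (Icc 0 1) s) (h : g s < C) :
    ∃ ε > 0, ∀ t ∈ Icc (0:ℝ) 1, |t - s| < ε → g t < C := by
  have hev : ∀ᶠ t in 𝓝[Icc (0:ℝ) 1] s, g t < C := hg.eventually_lt_const h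
  rw [eventually_iff, mem_nhdsWithin_iff] at hev
  obtain ⟨ε, hε, hsub⟩ := hev
  exact ⟨ε, hε, fun t ht hts => hsub ⟨by rwa [mem_ball, Real.dist_eq], ht⟩⟩

lemma cont_gt {g : ℝ → ℝ} {s C : ℝ} (hg : ContinuousWithinAt g (Icc 0 1) s) (h : C < g s) :
    ∃ ε > 0, ∀ t ∈ Icc (0:ℝ) 1, |t - s| < ε → C < g t := by
  obtain ⟨ε, hε, hh⟩ := cont_lt hg.neg (by linarith : -g s < -C)
  refine ⟨ε, hε, fun t ht h1 => ?_⟩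
  have h3 : -g t < -C := hh t ht h1
  linarith

lemma comp1_lip {k Γ ulo u₀ E c1 a a' bb bb' d : ℝ}
    (hk : 0 < k) (hΓ : 0 < Γ) (hulo : 0 < ulo)
    (ha : ulo ≤ a) (ha' : ulo ≤ a') (hau : a ≤ u₀) (ha'u : a' ≤ u₀)
    (hbb : 0 < bb) (hbb' : 0 < bb') (hbbE : bb ≤ E) (hbb'E : bb' ≤ E)
    (hΔa : |a - a'| ≤ d) (hΔb : |bb - bb'| ≤ d) :
    |k * (c1 + a + Γ * bb / a) - k * (c1 + a' + Γ * bb' / a')|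
      ≤ k * (1 + Γ * (u₀ + E) / ulo ^ 2) * d := by
  have hd : 0 ≤ d := le_trans (abs_nonneg _) hΔa
  have hapos : 0 < a := lt_of_lt_of_le hulo ha
  have ha'pos : 0 < a' := lt_of_lt_of_le hulo ha'
  have ha0 : a ≠ 0 := ne_of_gt hapos
  have ha'0 : a' ≠ 0 := ne_of_gt ha'pos
  have hu₀pos : 0 < u₀ := lt_of_lt_of_le hapos hau
  have key : k * (c1 + a + Γ * bb / a) - k * (c1 + a' + Γ * bb' / a')
      = k * ((a - a') + Γ * ((bb * a' - bb' * a) / (a * a'))) := by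
    field_simp
    ring
  have hnum : |bb * a' - bb' * a| ≤ u₀ * d + E * d := by
    have hsplit : bb * a' - bb' * a = a' * (bb - bb') + bb' * (a' - a) := by ring
    rw [hsplit]
    refine (abs_add_le _ _).trans ?_
    rw [abs_mul, abs_mul, abs_of_pos ha'pos, abs_of_pos hbb']
    have h5 : |a' - a| ≤ d := by rw [abs_sub_comm]; exact hΔa
    exact add_le_add (mul_le_mul ha'u hΔb (abs_nonneg _) hu₀pos.le)
      (mul_le_mul hbb'E h5 (abs_nonneg _) (le_trans hbb.le hbbE))
  have hden : ulo ^ 2 ≤ a * a' := by nlinarith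
  have hfrac : |(bb * a' - bb' * a) / (a * a')| ≤ (u₀ * d + E * d) / ulo ^ 2 := by
    rw [abs_div, abs_of_pos (mul_pos hapos ha'pos)]
    exact div_le_div₀ (le_trans (abs_nonneg _) hnum) hnum (pow_pos hulo 2) hden
  rw [key, abs_mul, abs_of_pos hk]
  have hsum : |(a - a') + Γ * ((bb * a' - bb' * a) / (a * a'))|
      ≤ d + Γ * ((u₀ * d + E * d) / ulo ^ 2) := by
    refine (abs_add_le _ _).trans (add_le_add hΔa ?_)
    rw [abs_mul, abs_of_pos hΓ]
    exact mul_le_mul_of_nonneg_left hfrac hΓ.le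
  calc k * |(a - a') + Γ * ((bb * a' - bb' * a) / (a * a'))|
      ≤ k * (d + Γ * ((u₀ * d + E * d) / ulo ^ 2)) := mul_le_mul_of_nonneg_left hsum hk.le
    _ = k * (1 + Γ * (u₀ + E) / ulo ^ 2) * d := by
        field_simp

lemma comp2_lip {m c1 c2 u₀ a a' bb bb' d : ℝ}
    (hm : 0 < m) (h0a : 0 ≤ a) (h0a' : 0 ≤ a') (hau : a ≤ u₀) (ha'u : a' ≤ u₀)
    (hΔa : |a - a'| ≤ d) (hΔb : |bb - bb'| ≤ d) :
    |m * (c2 - c1 * a - a ^ 2 / 2 + bb) - m * (c2 - c1 * a' - a' ^ 2 / 2 + bb')|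
      ≤ m * (|c1| + u₀ + 1) * d := by
  have hd : 0 ≤ d := le_trans (abs_nonneg _) hΔa
  have key : m * (c2 - c1 * a - a ^ 2 / 2 + bb) - m * (c2 - c1 * a' - a' ^ 2 / 2 + bb')
      = m * (((-c1) * (a - a') + (-(a + a') / 2) * (a - a')) + (bb - bb')) := by ring
  rw [key, abs_mul, abs_of_pos hm]
  have h1 : |(-c1) * (a - a')| ≤ |c1| * d := by
    rw [abs_mul, abs_neg]
    exact mul_le_mul_of_nonneg_left hΔa (abs_nonneg _)
  have h2 : |(-(a + a') / 2) * (a - a')| ≤ u₀ * d := by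
    rw [abs_mul]
    have h2a : |(-(a + a') / 2)| ≤ u₀ := by
      rw [abs_div, abs_neg]
      rw [abs_of_nonneg (by linarith : (0:ℝ) ≤ a + a'), abs_of_pos (by norm_num : (0:ℝ) < 2)]
      rw [div_le_iff₀ (by norm_num : (0:ℝ) < 2)]
      linarith
    exact mul_le_mul h2a hΔa (abs_nonneg _) (by linarith : (0:ℝ) ≤ u₀)
  have hsum : |((-c1) * (a - a') + (-(a + a') / 2) * (a - a')) + (bb - bb')|
      ≤ (|c1| * d + u₀ * d) + d := by
    refine (abs_add_le _ _).trans (add_le_add ((abs_add_le _ _).trans (add_le_add h1 h2)) hΔb)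
  calc m * |((-c1) * (a - a') + (-(a + a') / 2) * (a - a')) + (bb - bb')|
      ≤ m * ((|c1| * d + u₀ * d) + d) := mul_le_mul_of_nonneg_left hsum hm.le
    _ = m * (|c1| + u₀ + 1) * d := by ring

lemma comp1_bound {k Γ ulo u₀ E c1 a bb : ℝ}
    (hk : 0 < k) (hΓ : 0 < Γ) (hulo : 0 < ulo)
    (ha : ulo ≤ a) (hau : a ≤ u₀) (hbb : 0 < bb) (hbbE : bb ≤ E) :
    |k * (c1 + a + Γ * bb / a)| ≤ k * (|c1| + u₀ + Γ * E / ulo) := by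
  have hapos : 0 < a := lt_of_lt_of_le hulo ha
  rw [abs_mul, abs_of_pos hk]
  have h1 : |c1 + a + Γ * bb / a| ≤ |c1| + u₀ + Γ * E / ulo := by
    have h2 : Γ * bb / a ≤ Γ * E / ulo :=
      div_le_div₀ (le_of_lt (mul_pos hΓ (lt_of_lt_of_le hbb hbbE)))
        (mul_le_mul_of_nonneg_left hbbE hΓ.le) hulo ha
    have h3 : 0 < Γ * bb / a := div_pos (mul_pos hΓ hbb) hapos
    refine (abs_add_le _ _).trans (add_le_add ((abs_add_le _ _).trans (add_le_add le_rfl ?_)) ?_)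
    · rw [abs_of_pos hapos]; exact hau
    · rw [abs_of_pos h3]; exact h2
  exact mul_le_mul_of_nonneg_left h1 hk.le

lemma comp2_bound {m c1 c2 u₀ E a bb : ℝ}
    (hm : 0 < m) (h0a : 0 ≤ a) (hau : a ≤ u₀) (hbb : 0 < bb) (hbbE : bb ≤ E) :
    |m * (c2 - c1 * a - a ^ 2 / 2 + bb)| ≤ m * (|c2| + |c1| * u₀ + u₀ ^ 2 / 2 + E) := by
  rw [abs_mul, abs_of_pos hm]
  have hu₀ : 0 ≤ u₀ := le_trans h0a hau
  have h1 : |c2 - c1 * a - a ^ 2 / 2 + bb| ≤ |c2| + |c1| * u₀ + u₀ ^ 2 / 2 + E := by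
    have e1 : c2 - c1 * a - a ^ 2 / 2 + bb = ((c2 + (-c1) * a) + (-(a ^ 2) / 2)) + bb := by ring
    rw [e1]
    have t1 : |(-c1) * a| ≤ |c1| * u₀ := by
      rw [abs_mul, abs_neg, abs_of_nonneg h0a]
      exact mul_le_mul_of_nonneg_left hau (abs_nonneg _)
    have t2 : |(-(a ^ 2) / 2)| ≤ u₀ ^ 2 / 2 := by
      rw [abs_div, abs_neg, abs_of_nonneg (sq_nonneg a), abs_of_pos (by norm_num : (0:ℝ) < 2)]
      have : a ^ 2 ≤ u₀ ^ 2 := by nlinarith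
      linarith
    have t3 : |bb| ≤ E := by rw [abs_of_pos hbb]; exact hbbE
    calc |((c2 + (-c1) * a) + (-(a ^ 2) / 2)) + bb|
        ≤ |(c2 + (-c1) * a) + (-(a ^ 2) / 2)| + |bb| := abs_add_le _ _
      _ ≤ (|c2 + (-c1) * a| + |(-(a ^ 2) / 2)|) + |bb| := by
          exact add_le_add (abs_add_le _ _) le_rfl
      _ ≤ ((|c2| + |(-c1) * a|) + |(-(a ^ 2) / 2)|) + |bb| := by
          exact add_le_add (add_le_add (abs_add_le _ _) le_rfl) le_rfl
      _ ≤ |c2| + |c1| * u₀ + u₀ ^ 2 / 2 + E := by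
          linarith [t1, t2, t3]
  exact mul_le_mul_of_nonneg_left h1 hm.le


set_option maxHeartbeats 4000000 in
lemma feasible_of (Γ α ν u₀ e₀ : ℝ) (hΓ : 0 < Γ) (hα : 0 < α) (hν : 0 < ν)
    (hu₀ : 0 < u₀) (he₀ : 0 < e₀) (c : ℝ × ℝ) (E : ℝ)
    (hE : 2 * ((e₀ + (u₀/ν)/(2*(u₀/α))*u₀^2) +
          ((u₀/ν)/((Γ+1)*((u₀/ν)+(u₀/α)))) * |c.2|) *
          Real.exp ((Γ+1)*((u₀/ν)+(u₀/α))) ≤ E)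
    (h1 : c.1 + u₀ + Γ * E / u₀ < 0)
    (h2 : 0 < c.2 + e₀) : c ∈ Feasible Γ α ν u₀ e₀ := by
  obtain ⟨k, hk⟩ : ∃ k : ℝ, k = u₀ / α := ⟨_, rfl⟩
  obtain ⟨m, hm⟩ : ∃ m : ℝ, m = u₀ / ν := ⟨_, rfl⟩
  rw [← hk, ← hm] at hE
  have hkpos : 0 < k := by rw [hk]; exact div_pos hu₀ hα
  have hmpos : 0 < m := by rw [hm]; exact div_pos hu₀ hν
  obtain ⟨b, hb⟩ : ∃ b : ℝ, b = (Γ+1)*(m+k) := ⟨_, rfl⟩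
  rw [← hb] at hE
  have hbpos : 0 < b := by rw [hb]; positivity
  obtain ⟨w₀, hw₀def⟩ : ∃ w₀ : ℝ, w₀ = e₀ + m/(2*k)*u₀^2 := ⟨_, rfl⟩
  rw [← hw₀def] at hE
  have hw₀pos : 0 < w₀ := by rw [hw₀def]; positivity
  -- hE : 2 * (w₀ + m / b * |c.2|) * Real.exp b ≤ E
  have habs2 : (0:ℝ) ≤ |c.2| := abs_nonneg _
  have hexp1 : (1:ℝ) ≤ Real.exp b := by nlinarith [Real.add_one_le_exp b]
  have hqpos : 0 < m / b := by positivity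
  have hw2E : 2 * w₀ ≤ E := by
    nlinarith [mul_nonneg (mul_nonneg hqpos.le habs2) (Real.exp_pos b).le,
      mul_le_mul_of_nonneg_left hexp1 hw₀pos.le]
  have hEpos : 0 < E := by linarith
  have he₀w : e₀ ≤ w₀ := by
    have h3 : 0 ≤ m/(2*k)*u₀^2 := by positivity
    rw [hw₀def]; linarith
  have he₀E : e₀ < E := by linarith
  have hGp : 0 < Γ * E / u₀ := by positivity
  have hc1u : c.1 + u₀ < 0 := by linarith
  have h1c : 0 < 1 - c.1 := by linarith
  obtain ⟨ulo, hulodef⟩ : ∃ ulo : ℝ, ulo = Γ*e₀/(1-c.1) := ⟨_, rfl⟩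
  have hulopos : 0 < ulo := by rw [hulodef]; exact div_pos (mul_pos hΓ he₀) h1c
  have hGEu : Γ * E < (-(c.1) - u₀) * u₀ := by
    have h' : Γ * E / u₀ < -(c.1) - u₀ := by linarith
    exact (div_lt_iff₀ hu₀).mp h'
  have hulolt : ulo < u₀ := by
    rw [hulodef, div_lt_iff₀ h1c]
    nlinarith [mul_le_mul_of_nonneg_left hw2E hΓ.le,
      mul_le_mul_of_nonneg_left he₀w hΓ.le, mul_pos hΓ he₀, mul_pos hu₀ hu₀]
  have hkeyulo : Γ * e₀ / ulo = 1 - c.1 := by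
    have hne : Γ * e₀ ≠ 0 := ne_of_gt (mul_pos hΓ he₀)
    rw [hulodef]
    field_simp
  -- clamping functions
  obtain ⟨cu, hcu⟩ : ∃ cu : ℝ → ℝ, cu = fun x => max ulo (min x u₀) := ⟨_, rfl⟩
  obtain ⟨ce, hce⟩ : ∃ ce : ℝ → ℝ, ce = fun x => max e₀ (min x E) := ⟨_, rfl⟩
  have hcul : ∀ x, ulo ≤ cu x := fun x => by rw [hcu]; exact le_max_left _ _
  have hcuu : ∀ x, cu x ≤ u₀ := fun x => by
    rw [hcu]; exact max_le hulolt.le (min_le_right _ _)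
  have hcup : ∀ x, 0 < cu x := fun x => lt_of_lt_of_le hulopos (hcul x)
  have hcel : ∀ x, e₀ ≤ ce x := fun x => by rw [hce]; exact le_max_left _ _
  have hcep : ∀ x, 0 < ce x := fun x => lt_of_lt_of_le he₀ (hcel x)
  have hceu : ∀ x, ce x ≤ E := fun x => by
    rw [hce]; exact max_le he₀E.le (min_le_right _ _)
  have hcuid : ∀ x, ulo ≤ x → x ≤ u₀ → cu x = x := by
    intro x h1' h2'
    rw [hcu]
    simp only
    rw [min_eq_left h2', max_eq_right h1']
  have hceid : ∀ x, e₀ ≤ x → x ≤ E → ce x = x := by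
    intro x h1' h2'
    rw [hce]
    simp only
    rw [min_eq_left h2', max_eq_right h1']
  have hculip : ∀ x y, |cu x - cu y| ≤ |x - y| := by
    intro x y; rw [hcu]; exact clamp_lip _ _ _ _
  have hcelip : ∀ x y, |ce x - ce y| ≤ |x - y| := by
    intro x y; rw [hce]; exact clamp_lip _ _ _ _
  -- Lipschitz and bound constants
  obtain ⟨L, hL⟩ : ∃ L : ℝ, L = k*(1 + Γ*(u₀+E)/ulo^2) + m*(|c.1| + u₀ + 1) := ⟨_, rfl⟩
  have hL1nn : 0 ≤ Γ*(u₀+E)/ulo^2 := by positivity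
  have hL2pos : 0 < m*(|c.1| + u₀ + 1) := by positivity
  have hL1pos : 0 < k*(1 + Γ*(u₀+E)/ulo^2) := by nlinarith
  have hLpos : 0 < L := by rw [hL]; linarith
  obtain ⟨CC, hCC⟩ : ∃ CC : ℝ,
      CC = k*(|c.1| + u₀ + Γ*E/ulo) + m*(|c.2| + |c.1| * u₀ + u₀^2/2 + E) := ⟨_, rfl⟩
  have hq1 : 0 ≤ Γ*E/ulo := le_of_lt (div_pos (mul_pos hΓ hEpos) hulopos)
  have hCC1 : 0 ≤ k*(|c.1| + u₀ + Γ*E/ulo) := by positivity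
  have hCC2 : 0 ≤ m*(|c.2| + |c.1| * u₀ + u₀^2/2 + E) := by positivity
  have hCCpos : 0 ≤ CC := by rw [hCC]; linarith
  -- Picard–Lindelöf
  have hpl : IsPicardLindelof
      (fun (_ : ℝ) (p : ℝ × ℝ) =>
        ((k * (c.1 + cu p.1 + Γ * ce p.2 / cu p.1),
          m * (c.2 - c.1 * cu p.1 - (cu p.1) ^ 2 / 2 + ce p.2)) : ℝ × ℝ))
      (⟨0, by norm_num⟩ : Icc (0:ℝ) 1) ((u₀, e₀) : ℝ × ℝ) (Real.toNNReal CC) 0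
      (Real.toNNReal CC) (Real.toNNReal L) := by
    refine ⟨?_, ?_, ?_, ?_⟩
    · intro t _
      apply LipschitzWith.lipschitzOnWith
      apply LipschitzWith.of_dist_le_mul
      intro p q
      rw [Real.coe_toNNReal L hLpos.le]
      have hd1 : |p.1 - q.1| ≤ dist p q := by
        rw [← Real.dist_eq, Prod.dist_eq]; exact le_max_left _ _
      have hd2 : |p.2 - q.2| ≤ dist p q := by
        rw [← Real.dist_eq, Prod.dist_eq]; exact le_max_right _ _
      have hΔa : |cu p.1 - cu q.1| ≤ dist p q := le_trans (hculip _ _) hd1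
      have hΔb : |ce p.2 - ce q.2| ≤ dist p q := le_trans (hcelip _ _) hd2
      have hdnn : 0 ≤ dist p q := dist_nonneg
      have key1 := comp1_lip (c1 := c.1) hkpos hΓ hulopos (hcul p.1) (hcul q.1) (hcuu p.1)
        (hcuu q.1) (hcep p.2) (hcep q.2) (hceu p.2) (hceu q.2) hΔa hΔb
      have key2 := comp2_lip (c1 := c.1) (c2 := c.2) hmpos (hcup p.1).le (hcup q.1).le
        (hcuu p.1) (hcuu q.1) hΔa hΔb
      have hout : dist
          ((k * (c.1 + cu p.1 + Γ * ce p.2 / cu p.1),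
            m * (c.2 - c.1 * cu p.1 - (cu p.1) ^ 2 / 2 + ce p.2)) : ℝ × ℝ)
          ((k * (c.1 + cu q.1 + Γ * ce q.2 / cu q.1),
            m * (c.2 - c.1 * cu q.1 - (cu q.1) ^ 2 / 2 + ce q.2)) : ℝ × ℝ)
          = max |k * (c.1 + cu p.1 + Γ * ce p.2 / cu p.1) - k * (c.1 + cu q.1 + Γ * ce q.2 / cu q.1)|
                |m * (c.2 - c.1 * cu p.1 - (cu p.1) ^ 2 / 2 + ce p.2) - m * (c.2 - c.1 * cu q.1 - (cu q.1) ^ 2 / 2 + ce q.2)| := by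
        rw [Prod.dist_eq]
        simp [Real.dist_eq]
      rw [hout]
      apply max_le
      · refine key1.trans ?_
        rw [hL]
        linarith only [mul_nonneg hL2pos.le hdnn]
      · refine key2.trans ?_
        rw [hL]
        linarith only [mul_nonneg hL1pos.le hdnn]
    · intro x _
      exact continuousOn_const
    · intro t _ x _
      rw [Real.coe_toNNReal CC hCCpos]
      rw [Prod.norm_def]
      apply max_le
      · rw [Real.norm_eq_abs]
        refine (comp1_bound (c1 := c.1) hkpos hΓ hulopos (hcul x.1) (hcuu x.1) (hcep x.2)
          (hceu x.2)).trans ?_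
        rw [hCC]; linarith
      · rw [Real.norm_eq_abs]
        refine (comp2_bound (c1 := c.1) (c2 := c.2) hmpos (hcup x.1).le (hcuu x.1)
          (hcep x.2) (hceu x.2)).trans ?_
        rw [hCC]; linarith
    · simp [Real.coe_toNNReal CC hCCpos]
  obtain ⟨f, hf0, hf⟩ := hpl.exists_eq_forall_mem_Icc_hasDerivWithinAt₀
  obtain ⟨u, hu⟩ : ∃ u : ℝ → ℝ, u = fun t => (f t).1 := ⟨_, rfl⟩
  obtain ⟨ee, hee⟩ : ∃ ee : ℝ → ℝ, ee = fun t => (f t).2 := ⟨_, rfl⟩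
  have hu0 : u 0 = u₀ := by rw [hu]; simp [hf0]
  have he0 : ee 0 = e₀ := by rw [hee]; simp [hf0]
  have hu' : ∀ t ∈ Icc (0:ℝ) 1, HasDerivWithinAt u
      (k*(c.1 + cu (u t) + Γ * ce (ee t) / cu (u t))) (Icc 0 1) t := by
    intro t ht
    simp only [hu, hee]
    exact hdw_fst (hf t ht)
  have he' : ∀ t ∈ Icc (0:ℝ) 1, HasDerivWithinAt ee
      (m*(c.2 - c.1 * cu (u t) - (cu (u t))^2/2 + ce (ee t))) (Icc 0 1) t := by
    intro t ht
    simp only [hu, hee]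
    exact hdw_snd (hf t ht)
  have hucont : ContinuousOn u (Icc 0 1) := fun t ht => (hu' t ht).continuousWithinAt
  have hecont : ContinuousOn ee (Icc 0 1) := fun t ht => (he' t ht).continuousWithinAt
  have hgron : ∀ s ∈ Icc (0:ℝ) 1,
      (∀ t ∈ Icc 0 s, ulo ≤ u t ∧ u t ≤ u₀ ∧ e₀ ≤ ee t ∧ ee t ≤ E) →
      ∀ t ∈ Icc 0 s, ee t ≤ E / 2 := by
    intro s hs hP
    obtain ⟨w, hwdef⟩ : ∃ w : ℝ → ℝ, w = fun t => ee t + m/(2*k)*(u t)^2 := ⟨_, rfl⟩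
    have hwt : ∀ t, w t = ee t + m/(2*k)*(u t)^2 := fun t => by rw [hwdef]
    have hwd : ∀ t ∈ Ico (0:ℝ) s, HasDerivWithinAt w
        (m*(c.2 + (u t)^2/2 + (1+Γ)*(ee t))) (Ici t) t := by
      intro t ht
      have ht1 : t ∈ Icc (0:ℝ) 1 := ⟨ht.1, le_trans ht.2.le hs.2⟩
      have htIco : t ∈ Ico (0:ℝ) 1 := ⟨ht.1, lt_of_lt_of_le ht.2 hs.2⟩
      have hmem : Icc (0:ℝ) 1 ∈ 𝓝[Ici t] t := Icc_mem_nhdsGE_of_mem htIco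
      have hPt := hP t ⟨ht.1, ht.2.le⟩
      have hcut : cu (u t) = u t := hcuid _ hPt.1 hPt.2.1
      have hcet : ce (ee t) = ee t := hceid _ hPt.2.2.1 hPt.2.2.2
      have hDu : HasDerivWithinAt u (k*(c.1 + u t + Γ * ee t / u t)) (Ici t) t := by
        have h := (hu' t ht1).mono_of_mem_nhdsWithin hmem
        rwa [hcut, hcet] at h
      have hDe : HasDerivWithinAt ee (m*(c.2 - c.1 * u t - (u t)^2/2 + ee t)) (Ici t) t := by
        have h := (he' t ht1).mono_of_mem_nhdsWithin hmem
        rwa [hcut, hcet] at h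
      have hDu2 := hDu.pow 2
      have hcomb := hDe.add (hDu2.const_mul (m/(2*k)))
      have hut0 : u t ≠ 0 := ne_of_gt (lt_of_lt_of_le hulopos hPt.1)
      have hk0 : k ≠ 0 := ne_of_gt hkpos
      have hval : m*(c.2 + (u t)^2/2 + (1+Γ)*(ee t))
          = m*(c.2 - c.1 * u t - (u t)^2/2 + ee t)
            + m/(2*k) * (((2:ℕ):ℝ) * (u t)^(2-1) * (k*(c.1 + u t + Γ * ee t / u t))) := by
        push_cast
        field_simp
        ring
      rw [hwdef, hval]
      exact hcomb
    have hsub01 : Icc (0:ℝ) s ⊆ Icc 0 1 := fun x hx => ⟨hx.1, le_trans hx.2 hs.2⟩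
    have hwcont : ContinuousOn w (Icc 0 s) := by
      rw [hwdef]
      exact (hecont.mono hsub01).add (continuousOn_const.mul ((hucont.mono hsub01).pow 2))
    have hnorm0 : ‖w 0‖ ≤ w₀ := by
      have h0 : w 0 = w₀ := by rw [hwt 0, hu0, he0, hw₀def]
      rw [Real.norm_eq_abs, h0, abs_of_pos hw₀pos]
    have hbnd : ∀ t ∈ Ico (0:ℝ) s,
        ‖m*(c.2 + (u t)^2/2 + (1+Γ)*(ee t))‖ ≤ b * ‖w t‖ + m * |c.2| := by
      intro t ht
      have hPt := hP t ⟨ht.1, ht.2.le⟩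
      have hepos : 0 < ee t := lt_of_lt_of_le he₀ hPt.2.2.1
      have hwpos : 0 < w t := by
        rw [hwt t]
        have h3 : 0 ≤ m/(2*k)*(u t)^2 := by positivity
        linarith only [h3, hepos]
      rw [Real.norm_eq_abs, Real.norm_eq_abs, abs_of_pos hwpos]
      have h1Γ : (0:ℝ) ≤ 1 + Γ := by linarith
      have hpos2 : 0 ≤ m*((u t)^2/2 + (1+Γ)*(ee t)) := by
        apply mul_nonneg hmpos.le
        have h4 := mul_nonneg h1Γ hepos.le
        linarith only [sq_nonneg (u t), h4]
      have hsplit : m*(c.2 + (u t)^2/2 + (1+Γ)*(ee t))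
          = m*c.2 + m*((u t)^2/2 + (1+Γ)*(ee t)) := by ring
      rw [hsplit]
      refine (abs_add_le _ _).trans ?_
      rw [abs_mul, abs_of_pos hmpos]
      rw [abs_of_nonneg hpos2]
      have hbm : m*(1+Γ) ≤ b := by
        rw [hb]
        linarith only [mul_nonneg hkpos.le (by linarith only [hΓ] : (0:ℝ) ≤ Γ+1)]
      have hbμ : m/2 ≤ b*(m/(2*k)) := by
        have hi : b*(m/(2*k)) - m/2 = (m/(2*k))*((Γ+1)*(m+k) - k) := by
          rw [hb]; field_simp
        have hX : 0 ≤ (Γ+1)*(m+k) - k := by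
          linarith only [mul_nonneg hΓ.le (add_nonneg hmpos.le hkpos.le), hmpos]
        have hY : 0 ≤ (m/(2*k))*((Γ+1)*(m+k) - k) :=
          mul_nonneg (by positivity) hX
        linarith only [hi, hY]
      have hfin : m*((u t)^2/2 + (1+Γ)*(ee t)) ≤ b*(w t) := by
        rw [hwt t]
        linarith only [mul_nonneg (sub_nonneg.mpr hbμ) (sq_nonneg (u t)),
          mul_nonneg (sub_nonneg.mpr hbm) hepos.le]
      linarith only [hfin]
    have hgb := norm_le_gronwallBound_of_norm_deriv_right_le hwcont hwd hnorm0 hbnd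
    intro t ht
    have hgbt := hgb t ht
    simp only [gronwallBound_of_K_ne_0 (ne_of_gt hbpos), sub_zero] at hgbt
    have htle1 : t ≤ 1 := le_trans ht.2 hs.2
    have hexpt : Real.exp (b*t) ≤ Real.exp b := by
      apply Real.exp_le_exp.mpr
      linarith only [mul_le_mul_of_nonneg_left htle1 hbpos.le]
    have heet : ee t ≤ ‖w t‖ := by
      have h3 : 0 ≤ m/(2*k)*(u t)^2 := by positivity
      have h' : ee t ≤ w t := by rw [hwt t]; linarith only [h3]
      exact h'.trans (le_abs_self _)
    have hc2b : 0 ≤ m * |c.2| / b := by positivity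
    have hA1 : w₀ * Real.exp (b*t) ≤ w₀ * Real.exp b :=
      mul_le_mul_of_nonneg_left hexpt hw₀pos.le
    have hA2 : m * |c.2| / b * (Real.exp (b*t) - 1) ≤ m * |c.2| / b * Real.exp b := by
      apply mul_le_mul_of_nonneg_left _ hc2b
      linarith only [hexpt]
    have hA3 : w₀ * Real.exp b + m * |c.2| / b * Real.exp b
        = (w₀ + m/b * |c.2|) * Real.exp b := by ring
    linarith only [heet, hgbt, hA1, hA2, hA3, hE]
  have hinv : ∀ t ∈ Icc (0:ℝ) 1, ulo ≤ u t ∧ u t ≤ u₀ ∧ e₀ ≤ ee t ∧ ee t ≤ E := by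
    by_contra hcon
    obtain ⟨Bad, hBaddef⟩ : ∃ Bad : Set ℝ,
        Bad = {t | t ∈ Icc (0:ℝ) 1 ∧ ¬(ulo ≤ u t ∧ u t ≤ u₀ ∧ e₀ ≤ ee t ∧ ee t ≤ E)} :=
      ⟨_, rfl⟩
    have hBadmem : ∀ t, t ∈ Bad ↔
        (t ∈ Icc (0:ℝ) 1 ∧ ¬(ulo ≤ u t ∧ u t ≤ u₀ ∧ e₀ ≤ ee t ∧ ee t ≤ E)) := by
      intro t; rw [hBaddef]; rfl
    have hBadne : Bad.Nonempty := by
      rcases not_forall.mp hcon with ⟨t, ht⟩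
      push_neg at ht
      exact ⟨t, (hBadmem t).mpr ⟨ht.1, by push_neg; exact ht.2⟩⟩
    have hBadbdd : BddBelow Bad := ⟨0, fun t ht => ((hBadmem t).mp ht).1.1⟩
    obtain ⟨s, hsdef⟩ : ∃ s : ℝ, s = sInf Bad := ⟨_, rfl⟩
    have hs0 : 0 ≤ s := by
      rw [hsdef]; exact le_csInf hBadne (fun t ht => ((hBadmem t).mp ht).1.1)
    have hsle : ∀ t ∈ Bad, s ≤ t := fun t ht => by rw [hsdef]; exact csInf_le hBadbdd ht
    have hs1 : s ≤ 1 := by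
      obtain ⟨t, ht⟩ := hBadne
      exact le_trans (hsle t ht) ((hBadmem t).mp ht).1.2
    have hsIcc : s ∈ Icc (0:ℝ) 1 := ⟨hs0, hs1⟩
    have hP0 : ulo ≤ u 0 ∧ u 0 ≤ u₀ ∧ e₀ ≤ ee 0 ∧ ee 0 ≤ E := by
      rw [hu0, he0]; exact ⟨hulolt.le, le_refl _, le_refl _, he₀E.le⟩
    have hbefore : ∀ t, 0 ≤ t → t < s →
        ulo ≤ u t ∧ u t ≤ u₀ ∧ e₀ ≤ ee t ∧ ee t ≤ E := by
      intro t h0 hts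
      by_contra hPt
      have hmem : t ∈ Bad := (hBadmem t).mpr ⟨⟨h0, le_trans hts.le hs1⟩, hPt⟩
      exact absurd (hsle t hmem) (not_le.mpr hts)
    have hPs : ulo ≤ u s ∧ u s ≤ u₀ ∧ e₀ ≤ ee s ∧ ee s ≤ E := by
      rcases eq_or_lt_of_le hs0 with heq0 | hspos
      · rw [← heq0]; exact hP0
      · have hne : (𝓝[Ico (0:ℝ) s] s).NeBot := by
          rw [← mem_closure_iff_nhdsWithin_neBot, closure_Ico (ne_of_lt hspos)]
          exact ⟨hs0, le_refl s⟩
        haveI := hne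
        have hsub : Ico (0:ℝ) s ⊆ Icc 0 1 := fun x hx => ⟨hx.1, le_trans hx.2.le hs1⟩
        have htu : Tendsto u (𝓝[Ico (0:ℝ) s] s) (𝓝 (u s)) := (hucont s hsIcc).mono hsub
        have hte : Tendsto ee (𝓝[Ico (0:ℝ) s] s) (𝓝 (ee s)) := (hecont s hsIcc).mono hsub
        refine ⟨ge_of_tendsto htu ?_, le_of_tendsto htu ?_,
          ge_of_tendsto hte ?_, le_of_tendsto hte ?_⟩
        · exact eventually_nhdsWithin_of_forall (fun x hx => (hbefore x hx.1 hx.2).1)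
        · exact eventually_nhdsWithin_of_forall (fun x hx => (hbefore x hx.1 hx.2).2.1)
        · exact eventually_nhdsWithin_of_forall (fun x hx => (hbefore x hx.1 hx.2).2.2.1)
        · exact eventually_nhdsWithin_of_forall (fun x hx => (hbefore x hx.1 hx.2).2.2.2)
    have hsE2 : ∀ t ∈ Icc (0:ℝ) s, ee t ≤ E/2 := by
      apply hgron s hsIcc
      intro t ht
      rcases eq_or_lt_of_le ht.2 with heq | hlt
      · rw [heq]; exact hPs
      · exact hbefore t ht.1 hlt
    have hcus : cu (u s) = u s := hcuid _ hPs.1 hPs.2.1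
    have hces : ce (ee s) = ee s := hceid _ hPs.2.2.1 hPs.2.2.2
    have hclaim1 : ∃ ε > 0, ∀ t ∈ Icc (0:ℝ) 1, s < t → t < s + ε → u t ≤ u₀ := by
      rcases eq_or_lt_of_le hPs.2.1 with heq | hlt
      · have hd : k*(c.1 + cu (u s) + Γ * ce (ee s) / cu (u s)) < 0 := by
          rw [hcus, hces, heq]
          have h5 : Γ * ee s / u₀ ≤ Γ * E / u₀ :=
            div_le_div₀ (mul_nonneg hΓ.le hEpos.le)
              (mul_le_mul_of_nonneg_left hPs.2.2.2 hΓ.le) hu₀ le_rfl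
          have h6 : c.1 + u₀ + Γ * ee s / u₀ < 0 := by linarith only [h5, h1]
          exact mul_neg_of_pos_of_neg hkpos h6
        obtain ⟨ε, hε, hdec⟩ := right_dec (hu' s hsIcc) hd
        refine ⟨ε, hε, fun t ht h1' h2' => ?_⟩
        have h7 := hdec t ht h1' h2'
        rw [heq] at h7
        exact h7.le
      · obtain ⟨ε, hε, hdec⟩ := cont_lt (hucont s hsIcc) hlt
        refine ⟨ε, hε, fun t ht h1' h2' => ?_⟩
        refine (hdec t ht ?_).le
        rw [abs_of_pos (by linarith only [h1'] : (0:ℝ) < t - s)]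
        linarith only [h2']
    have hclaim2 : ∃ ε > 0, ∀ t ∈ Icc (0:ℝ) 1, s < t → t < s + ε → ulo ≤ u t := by
      rcases eq_or_lt_of_le hPs.1 with heq | hlt
      · have hd : 0 < k*(c.1 + cu (u s) + Γ * ce (ee s) / cu (u s)) := by
          rw [hcus, hces, ← heq]
          have h5 : Γ * e₀ / ulo ≤ Γ * ee s / ulo :=
            div_le_div₀ (mul_nonneg hΓ.le (le_trans he₀.le hPs.2.2.1))
              (mul_le_mul_of_nonneg_left hPs.2.2.1 hΓ.le) hulopos le_rfl
          rw [hkeyulo] at h5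
          apply mul_pos hkpos
          linarith only [h5, hulopos]
        obtain ⟨ε, hε, hinc⟩ := right_inc (hu' s hsIcc) hd
        refine ⟨ε, hε, fun t ht h1' h2' => ?_⟩
        have h7 := hinc t ht h1' h2'
        linarith only [h7, heq.le]
      · obtain ⟨ε, hε, hinc⟩ := cont_gt (hucont s hsIcc) hlt
        refine ⟨ε, hε, fun t ht h1' h2' => ?_⟩
        refine (hinc t ht ?_).le
        rw [abs_of_pos (by linarith only [h1'] : (0:ℝ) < t - s)]
        linarith only [h2']
    have hclaim3 : ∃ ε > 0, ∀ t ∈ Icc (0:ℝ) 1, s < t → t < s + ε → e₀ ≤ ee t := by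
      rcases eq_or_lt_of_le hPs.2.2.1 with heq | hlt
      · have hd : 0 < m*(c.2 - c.1 * cu (u s) - (cu (u s))^2/2 + ce (ee s)) := by
          rw [hcus, hces, ← heq]
          apply mul_pos hmpos
          have h5 : 0 < u s := lt_of_lt_of_le hulopos hPs.1
          have h6 : u s ≤ u₀ := hPs.2.1
          have h7 : u s * u s ≤ u₀ * u s := mul_le_mul_of_nonneg_right h6 h5.le
          have h8 : (0:ℝ) < -c.1 - u₀ := by linarith only [hc1u]
          linarith only [mul_pos h8 h5, h7, h2, sq_nonneg (u s), sq (u s) ▸ le_refl ((u s)^2)]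
        obtain ⟨ε, hε, hinc⟩ := right_inc (he' s hsIcc) hd
        refine ⟨ε, hε, fun t ht h1' h2' => ?_⟩
        have h7 := hinc t ht h1' h2'
        linarith only [h7, heq.le]
      · obtain ⟨ε, hε, hinc⟩ := cont_gt (hecont s hsIcc) hlt
        refine ⟨ε, hε, fun t ht h1' h2' => ?_⟩
        refine (hinc t ht ?_).le
        rw [abs_of_pos (by linarith only [h1'] : (0:ℝ) < t - s)]
        linarith only [h2']
    have hclaim4 : ∃ ε > 0, ∀ t ∈ Icc (0:ℝ) 1, s < t → t < s + ε → ee t ≤ E := by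
      have h4 : ee s < E := by
        have := hsE2 s ⟨hs0, le_refl _⟩
        linarith only [this, hEpos]
      obtain ⟨ε, hε, hdec⟩ := cont_lt (hecont s hsIcc) h4
      refine ⟨ε, hε, fun t ht h1' h2' => ?_⟩
      refine (hdec t ht ?_).le
      rw [abs_of_pos (by linarith only [h1'] : (0:ℝ) < t - s)]
      linarith only [h2']
    obtain ⟨ε1, hε1, hC1⟩ := hclaim1
    obtain ⟨ε2, hε2, hC2⟩ := hclaim2
    obtain ⟨ε3, hε3, hC3⟩ := hclaim3
    obtain ⟨ε4, hε4, hC4⟩ := hclaim4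
    obtain ⟨ε, hεdef⟩ : ∃ ε : ℝ, ε = min (min ε1 ε2) (min ε3 ε4) := ⟨_, rfl⟩
    have hεpos : 0 < ε := by
      rw [hεdef]
      exact lt_min (lt_min hε1 hε2) (lt_min hε3 hε4)
    have hεle1 : ε ≤ ε1 := by rw [hεdef]; exact le_trans (min_le_left _ _) (min_le_left _ _)
    have hεle2 : ε ≤ ε2 := by rw [hεdef]; exact le_trans (min_le_left _ _) (min_le_right _ _)
    have hεle3 : ε ≤ ε3 := by rw [hεdef]; exact le_trans (min_le_right _ _) (min_le_left _ _)
    have hεle4 : ε ≤ ε4 := by rw [hεdef]; exact le_trans (min_le_right _ _) (min_le_right _ _)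
    have hfinal : ∀ t ∈ Bad, s + ε ≤ t := by
      intro t htB
      by_contra hlt'
      have htlt : t < s + ε := not_le.mp hlt'
      have hst : s ≤ t := hsle t htB
      obtain ⟨ht1, ht2⟩ := (hBadmem t).mp htB
      rcases eq_or_lt_of_le hst with heq | hslt
      · rw [← heq] at ht2
        exact ht2 hPs
      · exact ht2 ⟨hC2 t ht1 hslt (by linarith only [htlt, hεle2]),
          hC1 t ht1 hslt (by linarith only [htlt, hεle1]),
          hC3 t ht1 hslt (by linarith only [htlt, hεle3]),
          hC4 t ht1 hslt (by linarith only [htlt, hεle4])⟩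
    have hcontra : s + ε ≤ sInf Bad := le_csInf hBadne (fun t ht => hfinal t ht)
    rw [← hsdef] at hcontra
    linarith only [hcontra, hεpos]
  refine ⟨u, ee, ⟨hu0, he0, ?_⟩, ?_⟩
  · intro x hx
    have hI := hinv x hx
    have hcux : cu (u x) = u x := hcuid _ hI.1 hI.2.1
    have hcex : ce (ee x) = ee x := hceid _ hI.2.2.1 hI.2.2.2
    constructor
    · have h := hu' x hx
      rw [hcux, hcex, hk] at h
      exact h
    · have h := he' x hx
      rw [hcux, hcex, hm] at h
      exact h
  · intro x hx
    have hI := hinv x hx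
    exact ⟨lt_of_lt_of_le hulopos hI.1, lt_of_lt_of_le he₀ hI.2.2.1⟩



/-- Lemma (C_unbounded): there is `A > 0` depending only on `Γ, α, ν, u₀, e₀` such that
`c₁ + u₀ + Γ A (|c₂|+1)/u₀ < 0` and `c₂ + e₀ > 0` imply `c ∈ 𝒞`.
In particular 𝒞 is unbounded. -/
theorem stmt8 (Γ α ν u₀ e₀ : ℝ) (hΓ : 0 < Γ) (hα : 0 < α) (hν : 0 < ν)
    (hu₀ : 0 < u₀) (he₀ : 0 < e₀) :
    (∃ A > (0:ℝ), ∀ c : ℝ × ℝ,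
      c.1 + u₀ + Γ * A * (|c.2| + 1) / u₀ < 0 → 0 < c.2 + e₀ →
      c ∈ Feasible Γ α ν u₀ e₀) ∧
    ¬ Bornology.IsBounded (Feasible Γ α ν u₀ e₀) := by
  set k : ℝ := u₀ / α with hk
  set m : ℝ := u₀ / ν with hm
  have hkpos : 0 < k := div_pos hu₀ hα
  have hmpos : 0 < m := div_pos hu₀ hν
  set b : ℝ := (Γ+1)*(m+k) with hb
  have hbpos : 0 < b := by positivity
  set w₀ : ℝ := e₀ + m/(2*k)*u₀^2 with hw₀
  have hw₀pos : 0 < w₀ := by positivity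
  set A : ℝ := 2 * (w₀ + m/b) * Real.exp b with hA
  have hApos : 0 < A := by positivity
  have main : ∀ c : ℝ × ℝ,
      c.1 + u₀ + Γ * A * (|c.2| + 1) / u₀ < 0 → 0 < c.2 + e₀ →
      c ∈ Feasible Γ α ν u₀ e₀ := by
    intro c hc1 hc2
    refine feasible_of Γ α ν u₀ e₀ hΓ hα hν hu₀ he₀ c (A * (|c.2|+1)) ?_ ?_ hc2
    · have h1 : (0:ℝ) ≤ |c.2| := abs_nonneg _
      have h2 : (0:ℝ) < Real.exp b := Real.exp_pos _
      have h3 : (0:ℝ) < m/b := by positivity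
      rw [← hm, ← hk, ← hb, ← hw₀, hA]
      have gen : ∀ w q x y : ℝ, 0 < w → 0 < q → 0 < x → 0 ≤ y →
          2 * (w + q * y) * x ≤ 2 * (w + q) * x * (y + 1) := by
        intro w q x y hw hq hx hy
        nlinarith [mul_nonneg (mul_nonneg hw.le hy) hx.le, mul_pos hq hx]
      exact gen w₀ (m/b) (Real.exp b) |c.2| hw₀pos h3 h2 h1
    · calc c.1 + u₀ + Γ * (A * (|c.2| + 1)) / u₀
          = c.1 + u₀ + Γ * A * (|c.2| + 1) / u₀ := by ring
        _ < 0 := hc1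
  refine ⟨⟨A, hApos, main⟩, ?_⟩
  intro hbdd
  obtain ⟨r, hr⟩ := isBounded_iff_forall_norm_le.mp hbdd
  set c : ℝ × ℝ := (-(u₀ + Γ*A/u₀ + |r| + 1), 0) with hc
  have hmem : c ∈ Feasible Γ α ν u₀ e₀ := by
    refine main c ?_ (by simpa [hc] using he₀)
    have : c.1 = -(u₀ + Γ*A/u₀ + |r| + 1) := rfl
    have h2 : c.2 = 0 := rfl
    rw [this, h2]
    have : Γ * A * (|(0:ℝ)| + 1) / u₀ = Γ*A/u₀ := by simp
    rw [this]
    have : (0:ℝ) ≤ |r| := abs_nonneg _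
    linarith
  have h3 := hr c hmem
  have h4 : |c.1| ≤ ‖c‖ := by
    have := norm_fst_le c
    simpa [Real.norm_eq_abs] using this
  have h5 : |c.1| = u₀ + Γ*A/u₀ + |r| + 1 := by
    have : c.1 = -(u₀ + Γ*A/u₀ + |r| + 1) := rfl
    rw [this, abs_neg, abs_of_pos]
    have : (0:ℝ) < Γ*A/u₀ := by positivity
    have h6 : (0:ℝ) ≤ |r| := abs_nonneg _
    linarith
  have h7 : r ≤ |r| := le_abs_self r
  have : (0:ℝ) < Γ*A/u₀ := by positivity
  linarith [h4.trans h3, h5 ▸ (h4.trans h3)]
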